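/- Let A be a unital C*-algebra, n ≥ 3 and k ≥ 1 integers, and p a family as in the context (a representation of Mor⁺(K_nᵏ, K_n)). Let 𝐱, 𝐱' : Fin k → Fin n satisfy 𝐱(i) ≠ 𝐱'(i) for all i. Fix S ⊆ Fin k and define 𝐲, 𝐲' : Fin k → Fin n by 𝐲(i) = 𝐱(i) and 𝐲'(i) = 𝐱'(i) for i ∈ S, and 𝐲(i) = 𝐱'(i) and 𝐲'(i) = 𝐱(i) for i ∉ S. Then for all a ∈ Fin n, p(𝐱, a) + p(𝐱', a) = p(𝐲, a) + p(𝐲', a). -/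
import Mathlib

/-- Auxiliary lemma: if `v : Fin n → (Fin k → Fin n)` is a family of `n` vectors which
pairwise differ in every coordinate, then for each output `a` the projections
`p (v m) a` sum to `1`. -/
lemma clique_sum_eq_one {A : Type*} [CStarAlgebra A] {n k : ℕ}
    (p : (Fin k → Fin n) → Fin n → A)
    (hidem : ∀ x a, p x a * p x a = p x a)
    (hsa : ∀ x a, star (p x a) = p x a)
    (hsum : ∀ x, ∑ a, p x a = 1)
    (horth : ∀ x y a, (∀ i, x i ≠ y i) → p x a * p y a = 0)
    (v : Fin n → (Fin k → Fin n))
    (hv : ∀ m m', m ≠ m' → ∀ i, v m i ≠ v m' i)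
    (a : Fin n) : ∑ m, p (v m) a = 1 := by
  let _ := CStarAlgebra.spectralOrder A
  have _ := CStarAlgebra.spectralOrderedRing A
  set S : Fin n → A := fun b => ∑ m, p (v m) b with hS
  have hproj : ∀ b, S b * S b = S b := by
    intro b
    calc (∑ m, p (v m) b) * (∑ m', p (v m') b)
        = ∑ m, ∑ m', p (v m) b * p (v m') b := by
          rw [Finset.sum_mul_sum]
      _ = ∑ m, p (v m) b := by
          refine Finset.sum_congr rfl fun m _ => ?_
          rw [Finset.sum_eq_single m (fun m' _ hne => horth _ _ _ (hv m m' hne.symm))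
            (fun h => absurd (Finset.mem_univ m) h)]
          exact hidem _ _
  have hsastar : ∀ b, star (S b) = S b := by
    intro b
    rw [hS]
    simp only [star_sum]
    exact Finset.sum_congr rfl fun m _ => hsa _ _
  have hle : ∀ b, (0 : A) ≤ 1 - S b := by
    intro b
    have h1 : (1 - S b) = star (1 - S b) * (1 - S b) := by
      rw [star_sub, star_one, hsastar]
      have hx : (1 - S b) * (1 - S b) = 1 - S b - S b + S b * S b := by noncomm_ring
      rw [hx, hproj b]
      abel
    rw [h1]
    exact star_mul_self_nonneg _
  have hsum0 : ∑ b, ((1 : A) - S b) = 0 := by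
    rw [Finset.sum_sub_distrib]
    have h2 : ∑ b : Fin n, S b = ∑ b : Fin n, (1 : A) := by
      rw [hS]
      simp only
      rw [Finset.sum_comm]
      exact Finset.sum_congr rfl fun m _ => hsum _
    rw [h2, sub_self]
  have h3 := (Finset.sum_eq_zero_iff_of_nonneg (fun b _ => hle b)).mp hsum0 a
    (Finset.mem_univ a)
  have h4 : (1 : A) = S a := by
    rw [← sub_eq_zero]
    exact h3
  exact h4.symm

/-- **Lemma (the-swapperrr).** Let `A` be a unital C*-algebra, `n ≥ 3`, `k ≥ 1`, and
`p` a representation of `Mor⁺(K_nᵏ, K_n)`. Let `x, x'` differ in every coordinate, let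
`S ⊆ Fin k`, and let `y, y'` be obtained from `x, x'` by swapping the coordinates outside
`S`. Then `p x a + p x' a = p y a + p y' a` for every `a`. -/
theorem stmt1 {A : Type*} [CStarAlgebra A]
    (n k : ℕ) (hn : 3 ≤ n) (hk : 1 ≤ k)
    (p : (Fin k → Fin n) → Fin n → A)
    (hidem : ∀ x a, p x a * p x a = p x a)
    (hsa : ∀ x a, star (p x a) = p x a)
    (hsum : ∀ x, ∑ a, p x a = 1)
    (horth : ∀ x y a, (∀ i, x i ≠ y i) → p x a * p y a = 0)
    (x x' : Fin k → Fin n) (hxx' : ∀ i, x i ≠ x' i)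
    (S : Finset (Fin k)) (a : Fin n) :
    p x a + p x' a
      = p (fun i => if i ∈ S then x i else x' i) a
        + p (fun i => if i ∈ S then x' i else x i) a := by
  haveI : NeZero n := ⟨by omega⟩
  have h01 : (0 : Fin n) ≠ 1 := by
    have hv1 : (1 : Fin n).val = 1 := by
      rw [Fin.val_one']
      exact Nat.mod_eq_of_lt (by omega)
    intro h
    have h' := congrArg Fin.val h
    rw [Fin.val_zero, hv1] at h'
    exact one_ne_zero h'.symm
  -- coordinatewise permutation sending 0 ↦ x i, 1 ↦ x' i
  set s : Fin k → Equiv.Perm (Fin n) := fun i => Equiv.swap 0 (x i) with hs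
  set τ : Fin k → Equiv.Perm (Fin n) :=
    fun i => (s i).trans (Equiv.swap (s i 1) (x' i)) with hτ
  have hs1 : ∀ i, x i ≠ s i 1 := by
    intro i
    by_cases h : x i = 1
    · have : s i 1 = 0 := by
        rw [hs]
        simp only
        rw [← h, Equiv.swap_apply_right]
      rw [this, h]
      exact h01.symm
    · have : s i 1 = 1 := by
        rw [hs]
        simp only
        exact Equiv.swap_apply_of_ne_of_ne h01.symm (fun hc => h hc.symm)
      rw [this]
      exact h
  have hτ0 : ∀ i, τ i 0 = x i := by
    intro i
    show Equiv.swap (s i 1) (x' i) (s i 0) = x i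
    have h0 : s i 0 = x i := Equiv.swap_apply_left 0 (x i)
    rw [h0]
    exact Equiv.swap_apply_of_ne_of_ne (hs1 i) (hxx' i)
  have hτ1 : ∀ i, τ i 1 = x' i := by
    intro i
    show Equiv.swap (s i 1) (x' i) (s i 1) = x' i
    exact Equiv.swap_apply_left _ _
  set σ : Equiv.Perm (Fin n) := Equiv.swap 0 1 with hσ
  set v : Fin n → Fin k → Fin n := fun m i => τ i m with hvdef
  set w : Fin n → Fin k → Fin n :=
    fun m i => if i ∈ S then τ i m else τ i (σ m) with hwdef
  have hv : ∀ m m', m ≠ m' → ∀ i, v m i ≠ v m' i :=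
    fun m m' h i => (τ i).injective.ne h
  have hw : ∀ m m', m ≠ m' → ∀ i, w m i ≠ w m' i := by
    intro m m' h i
    rw [hwdef]
    simp only
    by_cases hi : i ∈ S
    · simp only [hi, if_true]
      exact (τ i).injective.ne h
    · simp only [hi, if_false]
      exact (τ i).injective.ne (σ.injective.ne h)
  have h1 := clique_sum_eq_one p hidem hsa hsum horth v hv a
  have h2 := clique_sum_eq_one p hidem hsa hsum horth w hw a
  have hdiff : ∑ m, (p (v m) a - p (w m) a) = 0 := by
    rw [Finset.sum_sub_distrib, h1, h2, sub_self]
  have hvanish : ∀ m : Fin n, m ∈ (Finset.univ : Finset (Fin n)) →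
      m ∉ ({0, 1} : Finset (Fin n)) → p (v m) a - p (w m) a = 0 := by
    intro m _ hm
    simp only [Finset.mem_insert, Finset.mem_singleton, not_or] at hm
    have hwm : w m = v m := by
      funext i
      rw [hwdef, hvdef]
      simp only
      by_cases hi : i ∈ S
      · simp only [hi, if_true]
      · simp only [hi, if_false]
        rw [hσ]
        rw [Equiv.swap_apply_of_ne_of_ne hm.1 hm.2]
    rw [hwm, sub_self]
  have hpair : ∑ m ∈ ({0, 1} : Finset (Fin n)), (p (v m) a - p (w m) a) = 0 := by
    rw [Finset.sum_subset (Finset.subset_univ _) hvanish, hdiff]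
  rw [Finset.sum_pair h01] at hpair
  have hv0 : v 0 = x := funext fun i => hτ0 i
  have hv1 : v 1 = x' := funext fun i => hτ1 i
  have hw0 : w 0 = fun i => if i ∈ S then x i else x' i := by
    funext i
    rw [hwdef]
    simp only
    by_cases hi : i ∈ S
    · simp only [hi, if_true]
      exact hτ0 i
    · simp only [hi, if_false]
      rw [hσ, Equiv.swap_apply_left]
      exact hτ1 i
  have hw1 : w 1 = fun i => if i ∈ S then x' i else x i := by
    funext i
    rw [hwdef]
    simp only
    by_cases hi : i ∈ S
    · simp only [hi, if_true]
      exact hτ1 i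
    · simp only [hi, if_false]
      rw [hσ, Equiv.swap_apply_right]
      exact hτ0 i
  rw [hv0, hv1, hw0, hw1] at hpair
  have : p x a + p x' a - (p (fun i => if i ∈ S then x i else x' i) a
      + p (fun i => if i ∈ S then x' i else x i) a) = 0 := by
    rw [← hpair]
    abel
  exact sub_eq_zero.mp this
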